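/- For 0 < s < 1 and t > 1, define G(t) = C₁R₁^{2+s} ∫_{−1}^{1} (−s R₁^{−s−2}(t−y)^{−s−1} + 2(t−y)) (1−y²)^{(1+s)/2} dy, where C₁R₁^{2+s} = 1/β(1/2,(3+s)/2) and s R₁^{−s−2} = (2cos(sπ/2)/((s+1)π)) β(1/2,(3+s)/2). Then both prefactors extend to functions of s that are well-defined and such that the coefficient −s R₁^{−s−2} = −(2cos(sπ/2)/((s+1)π)) β(1/2,(3+s)/2) is nonnegative for 1 ≤ s ≤ 3 (since cos(sπ/2) ≤ 0 there); consequently G(t) > 0 for all t > 1 and 1 ≤ s < 3. -/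
import Mathlib


open Real

theorem G_positive (s : ℝ) (hs1 : 1 ≤ s) (hs3 : s < 3)
    (B : ℝ) (hB : B = Real.Gamma (1/2) * Real.Gamma ((3 + s)/2) /
      Real.Gamma (1/2 + (3 + s)/2))
    (G : ℝ → ℝ)
    (hG : ∀ t, G t = B⁻¹ * ∫ y in (-1:ℝ)..1,
      (-(2 * Real.cos (s * π / 2) / ((s + 1) * π) * B) * (t - y) ^ (-s - 1)
        + 2 * (t - y)) * (1 - y ^ 2) ^ ((1 + s) / 2)) :
    0 ≤ -(2 * Real.cos (s * π / 2) / ((s + 1) * π) * B) ∧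
    ∀ t : ℝ, 1 < t → 0 < G t := by
  have hBpos : 0 < B := by
    rw [hB]
    apply div_pos
    · exact mul_pos (Real.Gamma_pos_of_pos (by norm_num))
        (Real.Gamma_pos_of_pos (by linarith))
    · exact Real.Gamma_pos_of_pos (by linarith)
  have hcos : Real.cos (s * π / 2) ≤ 0 := by
    apply Real.cos_nonpos_of_pi_div_two_le_of_le
    · nlinarith [Real.pi_pos]
    · nlinarith [Real.pi_pos]
  have hcoef : 0 ≤ -(2 * Real.cos (s * π / 2) / ((s + 1) * π) * B) := by
    rw [neg_nonneg]
    apply mul_nonpos_of_nonpos_of_nonneg _ hBpos.le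
    apply div_nonpos_of_nonpos_of_nonneg (by linarith) 
    positivity
  refine ⟨hcoef, fun t ht => ?_⟩
  rw [hG t]
  apply mul_pos (inv_pos.mpr hBpos)
  apply intervalIntegral.intervalIntegral_pos_of_pos_on
  · -- integrability via continuity on [-1,1]
    apply ContinuousOn.intervalIntegrable
    rw [Set.uIcc_of_le (by norm_num)]
    apply ContinuousOn.mul
    · apply ContinuousOn.add
      · apply ContinuousOn.mul continuousOn_const
        apply ContinuousOn.rpow_const
        · exact (continuous_const.sub continuous_id).continuousOn
        · intro x hx
          left
          simp only [Set.mem_Icc] at hx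
          have : 0 < t - x := by linarith [hx.2]
          exact ne_of_gt this
      · exact (continuous_const.mul (continuous_const.sub continuous_id)).continuousOn
    · apply ContinuousOn.rpow_const
      · exact (Continuous.sub continuous_const (continuous_pow 2)).continuousOn
      · intro x _; right; linarith
  · intro x hx
    simp only [Set.mem_Ioo] at hx
    have h1 : 0 < t - x := by linarith [hx.2]
    have h2 : 0 < 1 - x ^ 2 := by nlinarith [hx.1, hx.2]
    apply mul_pos
    · have : 0 ≤ -(2 * Real.cos (s * π / 2) / ((s + 1) * π) * B) * (t - x) ^ (-s - 1) :=
        mul_nonneg hcoef (Real.rpow_nonneg h1.le _)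
      linarith
    · exact Real.rpow_pos_of_pos h2 _
  · norm_num
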